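/- Let U ∈ ℝ^{n×k} with k ≥ 1, let λ > 0, and let 𝟏 ∈ ℝ^k be the all-ones vector. Then the unique minimizer c*_λ of cᵀ(UᵀU + λI)c over c ∈ ℝ^k with 𝟏ᵀc = 1 is c*_λ = (UᵀU + λI)⁻¹𝟏 / (𝟏ᵀ(UᵀU + λI)⁻¹𝟏), and its Euclidean norm satisfies ‖c*_λ‖₂ ≤ √((λ + ‖U‖₂²)/(kλ)), where ‖U‖₂ is the spectral norm of U. -/

import Mathlib

open scoped Matrix.Norms.L2Operator
open Matrix

/-- The Euclidean (ℓ₂) norm of a vector in `ℝⁿ`. -/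
noncomputable def euclNorm {n : ℕ} (v : Fin n → ℝ) : ℝ := Real.sqrt (∑ i, v i ^ 2)

/-- Closed form and norm bound for the solution of the regularized AMPE problem
`min cᵀ(UᵀU + λI)c  s.t. 𝟏ᵀc = 1`. -/
theorem rmpe_solution {n k : ℕ} (hk : 1 ≤ k) (U : Matrix (Fin n) (Fin k) ℝ)
    (lam : ℝ) (hlam : 0 < lam)
    (N : Matrix (Fin k) (Fin k) ℝ)
    (hN : N = Uᵀ * U + lam • (1 : Matrix (Fin k) (Fin k) ℝ))
    (c : Fin k → ℝ)
    (hc : c = ((fun _ => (1 : ℝ)) ⬝ᵥ N⁻¹ *ᵥ (fun _ => (1 : ℝ)))⁻¹ •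
      N⁻¹ *ᵥ (fun _ => (1 : ℝ))) :
    (∑ i, c i = 1) ∧
    (∀ d : Fin k → ℝ, ∑ i, d i = 1 → c ⬝ᵥ N *ᵥ c ≤ d ⬝ᵥ N *ᵥ d) ∧
    (∀ d : Fin k → ℝ, ∑ i, d i = 1 → d ⬝ᵥ N *ᵥ d ≤ c ⬝ᵥ N *ᵥ c → d = c) ∧
    euclNorm c ≤ Real.sqrt ((lam + ‖U‖ ^ 2) / (k * lam)) := by
  haveI : NeZero k := ⟨by omega⟩
  set ones : Fin k → ℝ := fun _ => (1 : ℝ) with hones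
  -- N is positive definite
  have hNpd : N.PosDef := by
    rw [hN]
    have h1 : (Uᵀ * U : Matrix (Fin k) (Fin k) ℝ).PosSemidef := by
      simpa using Matrix.posSemidef_conjTranspose_mul_self U
    have h2 : (lam • (1 : Matrix (Fin k) (Fin k) ℝ)).PosDef := by
      refine Matrix.PosDef.of_dotProduct_mulVec_pos (by simp [Matrix.IsHermitian]) fun x hx => ?_
      have hmv : (lam • (1 : Matrix (Fin k) (Fin k) ℝ)) *ᵥ x = lam • x := by
        simp [Matrix.smul_mulVec]
      rw [hmv]
      simp only [star_trivial, dotProduct_smul, smul_eq_mul]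
      have hxx : 0 < x ⬝ᵥ x := by
        have := Matrix.dotProduct_star_self_pos_iff (v := x)
        simp only [star_trivial] at this
        exact this.mpr hx
      positivity
    exact Matrix.PosDef.posSemidef_add h1 h2
  haveI := hNpd.isUnit.invertible
  have hNinv : N * N⁻¹ = 1 := Matrix.mul_inv_of_invertible N
  have hones_ne : ones ≠ 0 := by
    intro h
    have := congrFun h ⟨0, by omega⟩
    simp [hones] at this
  set s : ℝ := ones ⬝ᵥ N⁻¹ *ᵥ ones with hs_def
  have hs : 0 < s := by
    have := hNpd.inv.dotProduct_mulVec_pos hones_ne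
    simpa [hs_def] using this
  -- dot with ones is the sum
  have hdot_ones : ∀ v : Fin k → ℝ, ones ⬝ᵥ v = ∑ i, v i := by
    intro v; simp [dotProduct, hones]
  -- N *ᵥ c = s⁻¹ • ones
  have hNc : N *ᵥ c = s⁻¹ • ones := by
    rw [hc, Matrix.mulVec_smul, Matrix.mulVec_mulVec, hNinv, Matrix.one_mulVec]
  -- sum of c is 1
  have hsum : ∑ i, c i = 1 := by
    have : ∑ i, c i = ones ⬝ᵥ c := (hdot_ones c).symm
    rw [this, hc]
    simp only [dotProduct_smul, smul_eq_mul, ← hs_def]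
    exact inv_mul_cancel₀ hs.ne'
  -- symmetry of N
  have hNsymm : Nᵀ = N := by
    have := hNpd.isHermitian
    simpa [Matrix.IsHermitian] using this
  -- orthogonality: for d summing to 1, (d - c) ⬝ᵥ N *ᵥ c = 0 and c ⬝ᵥ N *ᵥ (d-c) = 0
  have hkey : ∀ d : Fin k → ℝ, ∑ i, d i = 1 →
      d ⬝ᵥ N *ᵥ d = c ⬝ᵥ N *ᵥ c + (d - c) ⬝ᵥ N *ᵥ (d - c) := by
    intro d hd
    have hsum_e : ∑ i, (d - c) i = 0 := by
      simp only [Pi.sub_apply, Finset.sum_sub_distrib, hd, hsum, sub_self]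
    have heNc : (d - c) ⬝ᵥ N *ᵥ c = 0 := by
      rw [hNc, dotProduct_smul]
      have : (d - c) ⬝ᵥ ones = ∑ i, (d - c) i := by simp [dotProduct, hones]
      rw [this, hsum_e, smul_zero]
    have hcNe : c ⬝ᵥ N *ᵥ (d - c) = 0 := by
      rw [Matrix.dotProduct_mulVec]
      have hvm : c ᵥ* N = N *ᵥ c := by
        conv_lhs => rw [← hNsymm]
        exact Matrix.vecMul_transpose N c
      rw [hvm, hNc]
      have : (s⁻¹ • ones) ⬝ᵥ (d - c) = s⁻¹ * ((d - c) ⬝ᵥ ones) := by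
        rw [smul_dotProduct, dotProduct_comm]; rfl
      rw [this]
      have h2 : (d - c) ⬝ᵥ ones = ∑ i, (d - c) i := by simp [dotProduct, hones]
      rw [h2, hsum_e, mul_zero]
    have hdec : d = c + (d - c) := by ring_nf
    calc d ⬝ᵥ N *ᵥ d = (c + (d - c)) ⬝ᵥ N *ᵥ (c + (d - c)) := by rw [← hdec]
      _ = c ⬝ᵥ N *ᵥ c + c ⬝ᵥ N *ᵥ (d - c) + ((d - c) ⬝ᵥ N *ᵥ c
            + (d - c) ⬝ᵥ N *ᵥ (d - c)) := by
          rw [Matrix.mulVec_add, add_dotProduct, dotProduct_add,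
            dotProduct_add]
      _ = c ⬝ᵥ N *ᵥ c + (d - c) ⬝ᵥ N *ᵥ (d - c) := by rw [hcNe, heNc]; ring
  refine ⟨hsum, ?_, ?_, ?_⟩
  · intro d hd
    rw [hkey d hd]
    have := hNpd.posSemidef.dotProduct_mulVec_nonneg (d - c)
    simp only [star_trivial] at this
    linarith
  · intro d hd hle
    rw [hkey d hd] at hle
    by_contra hne
    have hne' : d - c ≠ 0 := sub_ne_zero_of_ne hne
    have := hNpd.dotProduct_mulVec_pos hne'
    simp only [star_trivial] at this
    linarith
  · -- norm bound
    have hquad : ∀ x : Fin k → ℝ, x ⬝ᵥ N *ᵥ x = (U *ᵥ x) ⬝ᵥ (U *ᵥ x) + lam * (x ⬝ᵥ x) := by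
      intro x
      rw [hN, Matrix.add_mulVec, dotProduct_add]
      congr 1
      · rw [← Matrix.mulVec_mulVec, Matrix.dotProduct_mulVec, Matrix.vecMul_transpose]
      · rw [Matrix.smul_mulVec, Matrix.one_mulVec, dotProduct_smul]; rfl
    -- norm of EuclideanSpace vector squared equals dot product
    have hnorm_sq : ∀ m : ℕ, ∀ y : EuclideanSpace ℝ (Fin m), ‖y‖ ^ 2 = y ⬝ᵥ y := by
      intro m y
      rw [EuclideanSpace.norm_eq, Real.sq_sqrt (by positivity)]
      simp [dotProduct, sq]
    -- candidate vector
    set d0 : Fin k → ℝ := fun _ => (k : ℝ)⁻¹ with hd0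
    have hk' : (0 : ℝ) < k := by exact_mod_cast Nat.pos_of_ne_zero (by omega)
    have hd0sum : ∑ i, d0 i = 1 := by
      simp [hd0, Finset.sum_const, mul_inv_cancel₀ hk'.ne']
    have hd0dot : d0 ⬝ᵥ d0 = (k : ℝ)⁻¹ := by
      simp [dotProduct, hd0]
      field_simp
    -- bound d0 ⬝ᵥ N *ᵥ d0
    have hUd0 : (U *ᵥ d0) ⬝ᵥ (U *ᵥ d0) ≤ ‖U‖ ^ 2 * (k : ℝ)⁻¹ := by
      set e0 : EuclideanSpace ℝ (Fin k) := (EuclideanSpace.equiv (Fin k) ℝ).symm d0 with he0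
      have hle := Matrix.l2_opNorm_mulVec U e0
      have h1 : (U *ᵥ d0) ⬝ᵥ (U *ᵥ d0)
          = ‖(EuclideanSpace.equiv (Fin n) ℝ).symm (U *ᵥ e0)‖ ^ 2 := by
        rw [hnorm_sq]; rfl
      have h2 : ‖e0‖ ^ 2 = (k : ℝ)⁻¹ := by
        rw [hnorm_sq]; exact hd0dot
      rw [h1, ← h2]
      have hnn : (0:ℝ) ≤ ‖(EuclideanSpace.equiv (Fin n) ℝ).symm (U *ᵥ e0)‖ := norm_nonneg _
      calc ‖(EuclideanSpace.equiv (Fin n) ℝ).symm (U *ᵥ e0)‖ ^ 2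
          ≤ (‖U‖ * ‖e0‖) ^ 2 := by apply pow_le_pow_left₀ hnn hle
        _ = ‖U‖ ^ 2 * ‖e0‖ ^ 2 := by ring
    have hbound1 : c ⬝ᵥ N *ᵥ c ≤ (lam + ‖U‖ ^ 2) / k := by
      have hmin : c ⬝ᵥ N *ᵥ c ≤ d0 ⬝ᵥ N *ᵥ d0 := by
        rw [hkey d0 hd0sum]
        have := hNpd.posSemidef.dotProduct_mulVec_nonneg (d0 - c)
        simp only [star_trivial] at this
        linarith
      have : d0 ⬝ᵥ N *ᵥ d0 ≤ (lam + ‖U‖ ^ 2) / k := by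
        rw [hquad d0, hd0dot]
        rw [div_eq_mul_inv, add_mul]
        have := hUd0
        linarith
      linarith
    have hlow : lam * (c ⬝ᵥ c) ≤ c ⬝ᵥ N *ᵥ c := by
      rw [hquad c]
      have hnn : 0 ≤ (U *ᵥ c) ⬝ᵥ (U *ᵥ c) := by
        have := hnorm_sq n (WithLp.toLp 2 (U *ᵥ c))
        rw [← this]
        positivity
      linarith
    have hcc : c ⬝ᵥ c ≤ (lam + ‖U‖ ^ 2) / (k * lam) := by
      rw [div_mul_eq_div_div]
      rw [le_div_iff₀ hlam]
      calc (c ⬝ᵥ c) * lam = lam * (c ⬝ᵥ c) := by ring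
        _ ≤ c ⬝ᵥ N *ᵥ c := hlow
        _ ≤ (lam + ‖U‖ ^ 2) / k := hbound1
    have heq : euclNorm c = Real.sqrt (c ⬝ᵥ c) := by
      unfold euclNorm
      congr 1
      simp [dotProduct, sq]
    rw [heq]
    exact Real.sqrt_le_sqrt hcc
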